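/- Let X = {0,1}^ℕ with the shift T, and let (a_1, a_2, …) be a sequence of non-negative numbers, with a_0 := 1. The set R(a; {[0^n]}_{n≥1}) of points x ∈ X whose frequency of hitting the cylinder [0^k] equals a_k for every k ≥ 1 is nonempty if and only if 1 = a_0 ≥ a_1 ≥ a_2 ≥ … and a_i − 2a_{i+1} + a_{i+2} ≥ 0 for all i ≥ 0. -/

import Mathlib

open MeasureTheory Filter Topology Set
open scoped ENNReal

/-! Symbolic dynamics on `X = {0,1}^ℕ`. -/

/-- The metric `d(x,y) = (1/2)^(first difference)` on the symbolic space `{0,1}^ℕ`. -/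
noncomputable instance : MetricSpace (ℕ → Bool) := PiNat.metricSpace

/-- The shift map on `{0,1}^ℕ`. -/
def shift : (ℕ → Bool) → ℕ → Bool := fun x n => x (n + 1)

/-- The cylinder `[w]` of all sequences beginning with the finite word `w`. -/
def cyl (w : List Bool) : Set (ℕ → Bool) :=
  {x | ∀ i : Fin w.length, x i.1 = w.get i}

/-- `R(x,[w]) = r` : the frequency of visits of the orbit of `x` to the cylinder `[w]`
exists and equals `r`. -/
def hasFreq (w : List Bool) (x : ℕ → Bool) (r : ℝ) : Prop :=
  Filter.Tendsto (fun n : ℕ =>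
      (∑ j ∈ Finset.range n, (cyl w).indicator (fun _ => (1 : ℝ)) (shift^[j] x)) / (n : ℝ))
    Filter.atTop (nhds r)

set_option maxHeartbeats 1000000

namespace FreqAux

/-- number of `j < n` such that `x` has a run of `k` zeros starting at `j`. -/
def Scount (x : ℕ → Bool) (k n : ℕ) : ℕ :=
  ((Finset.range n).filter fun j => ∀ i < k, x (j + i) = false).card

lemma shift_iterate (x : ℕ → Bool) (j i : ℕ) : (shift^[j] x) i = x (i + j) := by
  induction j generalizing x i with
  | zero => rfl
  | succ j ih =>
    rw [Function.iterate_succ_apply, ih]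
    simp [shift, Nat.add_assoc]

lemma mem_cyl_iff (x : ℕ → Bool) (k j : ℕ) :
    shift^[j] x ∈ cyl (List.replicate k false) ↔ ∀ i < k, x (j + i) = false := by
  constructor
  · intro H i hi
    have := H ⟨i, by simpa using hi⟩
    simpa [shift_iterate, Nat.add_comm] using this
  · intro H i
    have hi : (i : ℕ) < k := by simpa using i.2
    have := H i hi
    simp only [List.get_eq_getElem, List.getElem_replicate]
    simpa [shift_iterate, Nat.add_comm] using this

lemma sum_indicator_eq (x : ℕ → Bool) (k n : ℕ) :
    (∑ j ∈ Finset.range n, (cyl (List.replicate k false)).indicator (fun _ => (1 : ℝ)) (shift^[j] x))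
      = (Scount x k n : ℝ) := by
  classical
  rw [Scount, Finset.card_filter]
  push_cast
  refine Finset.sum_congr rfl fun j _ => ?_
  rw [Set.indicator_apply]
  by_cases h : ∀ i < k, x (j + i) = false
  · simp only [if_pos ((mem_cyl_iff x k j).2 h), if_pos h]
  · simp only [if_neg h, if_neg (fun hmem => h ((mem_cyl_iff x k j).1 hmem))]

lemma hasFreq_iff (x : ℕ → Bool) (k : ℕ) (r : ℝ) :
    hasFreq (List.replicate k false) x r ↔
      Tendsto (fun n => (Scount x k n : ℝ) / n) atTop (𝓝 r) := by
  unfold hasFreq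
  refine tendsto_congr fun n => ?_
  rw [sum_indicator_eq]


def Ccount (x : ℕ → Bool) (k n : ℕ) : ℕ :=
  ((Finset.range n).filter fun j => (∀ i < k, x (j + i) = false) ∧ x (j + k) = true).card

lemma Scount_zero (x : ℕ → Bool) (n : ℕ) : Scount x 0 n = n := by
  simp [Scount]

lemma Scount_anti (x : ℕ → Bool) (k n : ℕ) : Scount x (k + 1) n ≤ Scount x k n := by
  apply Finset.card_le_card
  apply Finset.monotone_filter_right
  intro j _ hj i hi
  exact hj i (Nat.lt_succ_of_lt hi)

lemma Scount_le (x : ℕ → Bool) (k n : ℕ) : Scount x k n ≤ n := by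
  simpa [Scount] using Finset.card_filter_le (Finset.range n) _

lemma S_split (x : ℕ → Bool) (k n : ℕ) :
    Scount x k n = Scount x (k + 1) n + Ccount x k n := by
  classical
  rw [Scount, Scount, Ccount]
  have h := Finset.card_filter_add_card_filter_not
    (s := (Finset.range n).filter fun j => ∀ i < k, x (j + i) = false)
    (p := fun j => x (j + k) = true)
  simp only [Finset.filter_filter] at h
  have e1 : ((Finset.range n).filter fun j => (∀ i < k, x (j + i) = false) ∧ ¬x (j + k) = true)
      = (Finset.range n).filter fun j => ∀ i < k + 1, x (j + i) = false := by
    apply Finset.filter_congr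
    intro j _
    simp only [Bool.not_eq_true, eq_iff_iff]
    constructor
    · rintro ⟨h1, h2⟩ i hi
      rcases Nat.lt_succ_iff_lt_or_eq.1 hi with hi | rfl
      · exact h1 i hi
      · exact h2
    · intro h1
      exact ⟨fun i hi => h1 i (Nat.lt_succ_of_lt hi), h1 k (Nat.lt_succ_self k)⟩
  rw [e1] at h
  omega

lemma C_succ_le (x : ℕ → Bool) (k n : ℕ) : Ccount x (k + 1) n ≤ Ccount x k (n + 1) := by
  apply Finset.card_le_card_of_injOn (fun j => j + 1)
  · intro j hj
    simp only [Finset.mem_coe, Finset.mem_filter, Finset.mem_range] at hj ⊢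
    obtain ⟨hjn, h1, h2⟩ := hj
    refine ⟨by omega, fun i hi => ?_, ?_⟩
    · have := h1 (i + 1) (by omega)
      simpa [Nat.add_assoc, Nat.add_comm 1 i] using this
    · simpa [Nat.add_assoc, Nat.add_comm 1 k] using h2
  · intro u _ v _ h
    simpa using h

lemma C_mono_succ (x : ℕ → Bool) (k n : ℕ) : Ccount x k (n + 1) ≤ Ccount x k n + 1 := by
  rw [Ccount, Ccount, Finset.range_add_one]
  classical
  calc ((insert n (Finset.range n)).filter _).card
      ≤ (insert n ((Finset.range n).filter fun j => (∀ i < k, x (j + i) = false) ∧ x (j + k) = true)).card := by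
        apply Finset.card_le_card
        intro j hj
        simp only [Finset.mem_filter, Finset.mem_insert] at hj ⊢
        tauto
    _ ≤ _ + 1 := Finset.card_insert_le _ _

lemma key_convex (x : ℕ → Bool) (i n : ℕ) :
    2 * Scount x (i + 1) n ≤ Scount x i n + Scount x (i + 2) n + 1 := by
  have h1 := S_split x i n
  have h2 : Scount x (i + 1) n = Scount x (i + 2) n + Ccount x (i + 1) n := S_split x (i + 1) n
  have h3 := C_succ_le x i n
  have h4 := C_mono_succ x i n
  omega

lemma div_cast_le {p q : ℕ} (h : p ≤ q) (n : ℕ) : (p : ℝ) / n ≤ (q : ℝ) / n := by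
  rw [div_eq_mul_inv, div_eq_mul_inv]
  exact mul_le_mul_of_nonneg_right (by exact_mod_cast h) (inv_nonneg.2 (Nat.cast_nonneg n))

lemma forward (a : ℕ → ℝ) (ha0 : a 0 = 1) (x : ℕ → Bool)
    (hx : ∀ k, 1 ≤ k → Tendsto (fun n => (Scount x k n : ℝ) / n) atTop (𝓝 (a k))) :
    (∀ i : ℕ, a (i + 1) ≤ a i) ∧ ∀ i : ℕ, 0 ≤ a i - 2 * a (i + 1) + a (i + 2) := by
  have hxall : ∀ k, Tendsto (fun n => (Scount x k n : ℝ) / n) atTop (𝓝 (a k)) := by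
    intro k
    rcases Nat.eq_zero_or_pos k with rfl | hk
    · rw [ha0]
      apply Tendsto.congr' (f₁ := fun _ : ℕ => (1 : ℝ))
      · filter_upwards [eventually_ge_atTop 1] with n hn
        rw [Scount_zero]
        rw [div_self]
        positivity
      · exact tendsto_const_nhds
    · exact hx k hk
  constructor
  · intro i
    exact le_of_tendsto_of_tendsto' (hxall (i + 1)) (hxall i)
      fun n => div_cast_le (Scount_anti x i n) n
  · intro i
    have h2 : Tendsto (fun n => ((2 * Scount x (i + 1) n : ℕ) : ℝ) / n) atTop
        (𝓝 (2 * a (i + 1))) := by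
      apply Tendsto.congr (f₁ := fun n => 2 * ((Scount x (i + 1) n : ℝ) / n))
      · intro n; push_cast; ring
      · exact (hxall (i + 1)).const_mul 2
    have hR : Tendsto (fun n => ((Scount x i n + Scount x (i + 2) n + 1 : ℕ) : ℝ) / n) atTop
        (𝓝 (a i + a (i + 2) + 0)) := by
      apply Tendsto.congr
        (f₁ := fun n => (Scount x i n : ℝ) / n + (Scount x (i + 2) n : ℝ) / n + 1 / n)
      · intro n; push_cast; ring
      · exact ((hxall i).add (hxall (i + 2))).add tendsto_one_div_atTop_nhds_zero_nat
    have := le_of_tendsto_of_tendsto' h2 hR fun n => div_cast_le (key_convex x i n) n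
    linarith


/-- count of occurrences of the word `0^k` inside the finite word `w`. -/
def cnt (k : ℕ) (w : List Bool) : ℕ :=
  ((Finset.range w.length).filter fun p => ∀ i < k, w.getD (p + i) true = false).card

/-- `w` ends with the letter `true` (trivially true for the empty word). -/
def ET (w : List Bool) : Prop := w.getD (w.length - 1) true = true

lemma ET_nil : ET ([] : List Bool) := rfl

lemma ET_append {u v : List Bool} (hu : ET u) (hv : ET v) : ET (u ++ v) := by
  rcases eq_or_ne v [] with rfl | hne
  · simpa [ET] using hu
  · have hvlen : 0 < v.length := List.length_pos_iff.2 hne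
    unfold ET at hv ⊢
    rw [List.length_append]
    rw [List.getD_append_right u v true _ (by omega)]
    rw [show u.length + v.length - 1 - u.length = v.length - 1 by omega]
    exact hv

lemma card_filter_range_add (P : ℕ → Prop) [DecidablePred P] (A B : ℕ) :
    ((Finset.range (A + B)).filter P).card
      = ((Finset.range A).filter P).card + ((Finset.range B).filter fun p => P (A + p)).card := by
  classical
  rw [Finset.range_add, Finset.filter_union, Finset.card_union_of_disjoint, Finset.filter_map,
    Finset.card_map]
  · congr 1
  · refine Finset.disjoint_left.2 fun j hj hj2 => ?_
    simp only [Finset.mem_filter, Finset.mem_range] at hj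
    simp only [Finset.mem_filter, Finset.mem_map, addLeftEmbedding_apply] at hj2
    obtain ⟨⟨p, hp, rfl⟩, -⟩ := hj2
    omega

lemma cnt_le_length (k : ℕ) (w : List Bool) : cnt k w ≤ w.length := by
  simpa [cnt] using Finset.card_filter_le (Finset.range w.length) _

lemma cnt_append (k : ℕ) (hk : 1 ≤ k) (u v : List Bool) (hu : ET u) :
    cnt k (u ++ v) = cnt k u + cnt k v := by
  classical
  rw [cnt, List.length_append, card_filter_range_add]
  congr 1
  · apply Finset.card_bij (fun p _ => p)
    · intro p hp
      simp only [Finset.mem_filter, Finset.mem_range] at hp ⊢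
      obtain ⟨hplen, hpred⟩ := hp
      refine ⟨hplen, ?_⟩
      by_cases hpk : p + k ≤ u.length
      · intro i hi
        have := hpred i hi
        rwa [List.getD_append u v true _ (by omega)] at this
      · exfalso
        have hul : 1 ≤ u.length := by omega
        have hi0 : u.length - 1 - p < k := by omega
        have := hpred (u.length - 1 - p) hi0
        rw [show p + (u.length - 1 - p) = u.length - 1 by omega] at this
        rw [List.getD_append u v true _ (by omega)] at this
        rw [hu] at this
        exact absurd this (by simp)
    · intro p hp q hq h; exact h
    · intro p hp
      refine ⟨p, ?_, rfl⟩
      simp only [Finset.mem_filter, Finset.mem_range] at hp ⊢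
      obtain ⟨hplen, hpred⟩ := hp
      refine ⟨hplen, ?_⟩
      by_cases hpk : p + k ≤ u.length
      · intro i hi
        have := hpred i hi
        rwa [List.getD_append u v true _ (by omega)]
      · exfalso
        have hul : 1 ≤ u.length := by omega
        have hi0 : u.length - 1 - p < k := by omega
        have := hpred (u.length - 1 - p) hi0
        rw [show p + (u.length - 1 - p) = u.length - 1 by omega] at this
        rw [hu] at this
        exact absurd this (by simp)
  · apply Finset.card_bij (fun p _ => p)
    · intro p hp
      simp only [Finset.mem_filter, Finset.mem_range] at hp ⊢
      obtain ⟨hplen, hpred⟩ := hp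
      refine ⟨hplen, fun i hi => ?_⟩
      have := hpred i hi
      rwa [List.getD_append_right u v true _ (by omega),
        show u.length + p + i - u.length = p + i by omega] at this
    · intro p hp q hq h; exact h
    · intro p hp
      refine ⟨p, ?_, rfl⟩
      simp only [Finset.mem_filter, Finset.mem_range] at hp ⊢
      obtain ⟨hplen, hpred⟩ := hp
      refine ⟨hplen, fun i hi => ?_⟩
      rw [List.getD_append_right u v true _ (by omega),
        show u.length + p + i - u.length = p + i by omega]
      exact hpred i hi

/-- The basic building block `0^j 1`. -/
def Bw (j : ℕ) : List Bool := List.replicate j false ++ [true]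

lemma length_Bw (j : ℕ) : (Bw j).length = j + 1 := by simp [Bw]

lemma ET_Bw (j : ℕ) : ET (Bw j) := by
  unfold ET Bw
  rw [List.length_append, List.length_replicate]
  simp only [List.length_singleton]
  rw [show j + 1 - 1 = j by omega]
  rw [List.getD_append_right _ _ true _ (by simp)]
  simp

lemma getD_Bw_lt (j p : ℕ) (hp : p < j) : (Bw j).getD p true = false := by
  unfold Bw
  rw [List.getD_append _ _ true _ (by simpa using hp)]
  rw [List.getD_eq_getElem _ _ (by simpa using hp)]
  simp

lemma getD_Bw_eq (j : ℕ) : (Bw j).getD j true = true := by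
  unfold Bw
  rw [List.getD_append_right _ _ true _ (by simp)]
  simp

lemma cnt_Bw (k : ℕ) (hk : 1 ≤ k) (j : ℕ) : cnt k (Bw j) = j + 1 - k := by
  classical
  rw [cnt, length_Bw]
  have : ((Finset.range (j + 1)).filter fun p => ∀ i < k, (Bw j).getD (p + i) true = false)
      = Finset.range (j + 1 - k) := by
    ext p
    simp only [Finset.mem_filter, Finset.mem_range]
    constructor
    · rintro ⟨hp, hpred⟩
      by_contra hc
      have hpk : j < p + k := by omega
      have hi0 : j - p < k := by omega
      have := hpred (j - p) hi0
      rw [show p + (j - p) = j by omega, getD_Bw_eq] at this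
      exact absurd this (by simp)
    · intro hp
      refine ⟨by omega, fun i hi => ?_⟩
      exact getD_Bw_lt j (p + i) (by omega)
  rw [this, Finset.card_range]

/-- `c` copies of the block `0^j 1`. -/
def repBw (c j : ℕ) : List Bool := (List.replicate c (Bw j)).flatten

lemma repBw_succ (c j : ℕ) : repBw (c + 1) j = Bw j ++ repBw c j := by
  simp [repBw, List.replicate_succ]

lemma ET_repBw (c j : ℕ) : ET (repBw c j) := by
  induction c with
  | zero => exact ET_nil
  | succ c ih => rw [repBw_succ]; exact ET_append (ET_Bw j) ih

lemma length_repBw (c j : ℕ) : (repBw c j).length = c * (j + 1) := by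
  induction c with
  | zero => simp [repBw]
  | succ c ih => rw [repBw_succ, List.length_append, ih, length_Bw]; ring

lemma cnt_repBw (k : ℕ) (hk : 1 ≤ k) (c j : ℕ) : cnt k (repBw c j) = c * (j + 1 - k) := by
  induction c with
  | zero => simp [repBw, cnt]; rfl
  | succ c ih => rw [repBw_succ, cnt_append k hk _ _ (ET_Bw j), cnt_Bw k hk, ih]; ring

/-- concatenation of `u j` copies of `0^j 1` for `j < m`. -/
def wordA (u : ℕ → ℕ) : ℕ → List Bool
  | 0 => []
  | m + 1 => wordA u m ++ repBw (u m) m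

lemma ET_wordA (u : ℕ → ℕ) (m : ℕ) : ET (wordA u m) := by
  induction m with
  | zero => exact ET_nil
  | succ m ih => exact ET_append ih (ET_repBw _ _)

lemma length_wordA (u : ℕ → ℕ) (m : ℕ) :
    (wordA u m).length = ∑ j ∈ Finset.range m, u j * (j + 1) := by
  induction m with
  | zero => simp [wordA]
  | succ m ih =>
    rw [wordA, List.length_append, ih, length_repBw, Finset.sum_range_succ]

lemma cnt_wordA (k : ℕ) (hk : 1 ≤ k) (u : ℕ → ℕ) (m : ℕ) :
    cnt k (wordA u m) = ∑ j ∈ Finset.range m, u j * (j + 1 - k) := by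
  induction m with
  | zero => simp [wordA, cnt]; rfl
  | succ m ih =>
    rw [wordA, cnt_append k hk _ _ (ET_wordA u m), ih, cnt_repBw k hk, Finset.sum_range_succ]

/-- The full pattern word: runs of each length `j < m` with multiplicities `u j`,
followed by one long run `0^Z 1`. -/
def Pword (u : ℕ → ℕ) (m Z : ℕ) : List Bool := wordA u m ++ Bw Z

lemma ET_Pword (u : ℕ → ℕ) (m Z : ℕ) : ET (Pword u m Z) :=
  ET_append (ET_wordA u m) (ET_Bw Z)

lemma length_Pword (u : ℕ → ℕ) (m Z : ℕ) :
    (Pword u m Z).length = (∑ j ∈ Finset.range m, u j * (j + 1)) + (Z + 1) := by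
  rw [Pword, List.length_append, length_wordA, length_Bw]

lemma cnt_Pword (k : ℕ) (hk : 1 ≤ k) (u : ℕ → ℕ) (m Z : ℕ) :
    cnt k (Pword u m Z) = (∑ j ∈ Finset.range m, u j * (j + 1 - k)) + (Z + 1 - k) := by
  rw [Pword, cnt_append k hk _ _ (ET_wordA u m), cnt_wordA k hk, cnt_Bw k hk]

lemma length_Pword_pos (u : ℕ → ℕ) (m Z : ℕ) : 0 < (Pword u m Z).length := by
  rw [length_Pword]; omega

/-- the key counting lemma: if `x` restricted to `[M, M + |w|)` coincides with a word `w`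
ending in `true`, then the number of runs `0^k` starting in that window is `cnt k w`. -/
lemma Scount_add_word (x : ℕ → Bool) (k : ℕ) (hk : 1 ≤ k) (M : ℕ) (w : List Bool)
    (hw : ∀ q < w.length, x (M + q) = w.getD q true) (hlast : ET w) :
    Scount x k (M + w.length) = Scount x k M + cnt k w := by
  classical
  rw [Scount, card_filter_range_add, Scount, cnt]
  congr 1
  apply Finset.card_bij (fun p _ => p)
  · intro p hp
    simp only [Finset.mem_filter, Finset.mem_range] at hp ⊢
    obtain ⟨hplen, hpred⟩ := hp
    refine ⟨hplen, ?_⟩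
    by_cases hpk : p + k ≤ w.length
    · intro i hi
      have := hpred i hi
      rw [show M + p + i = M + (p + i) by omega, hw (p + i) (by omega)] at this
      exact this
    · exfalso
      have hwl : 1 ≤ w.length := by omega
      have hi0 : w.length - 1 - p < k := by omega
      have := hpred (w.length - 1 - p) hi0
      rw [show M + p + (w.length - 1 - p) = M + (w.length - 1) by omega,
        hw (w.length - 1) (by omega), hlast] at this
      exact absurd this (by simp)
  · intro p hp q hq h; exact h
  · intro p hp
    refine ⟨p, ?_, rfl⟩
    simp only [Finset.mem_filter, Finset.mem_range] at hp ⊢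
    obtain ⟨hplen, hpred⟩ := hp
    refine ⟨hplen, ?_⟩
    by_cases hpk : p + k ≤ w.length
    · intro i hi
      rw [show M + p + i = M + (p + i) by omega, hw (p + i) (by omega)]
      exact hpred i hi
    · exfalso
      have hwl : 1 ≤ w.length := by omega
      have hi0 : w.length - 1 - p < k := by omega
      have := hpred (w.length - 1 - p) hi0
      rw [show p + (w.length - 1 - p) = w.length - 1 by omega, hlast] at this
      exact absurd this (by simp)

lemma Scount_le_add (x : ℕ → Bool) (k m n : ℕ) (hmn : m ≤ n) :
    Scount x k m ≤ Scount x k n ∧ Scount x k n ≤ Scount x k m + (n - m) := by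
  classical
  obtain ⟨B, rfl⟩ : ∃ B, n = m + B := ⟨n - m, by omega⟩
  have h := card_filter_range_add (P := fun j => ∀ i < k, x (j + i) = false) m B
  beta_reduce at h
  have h2 := Finset.card_filter_le (Finset.range B)
    (fun p => ∀ i < k, x (m + p + i) = false)
  simp only [Finset.card_range] at h2
  unfold Scount
  omega


variable (a : ℕ → ℝ)

noncomputable def dd (j : ℕ) : ℝ := a j - a (j + 1)
noncomputable def hh (j : ℕ) : ℝ := dd a j - dd a (j + 1)
noncomputable def LL : ℝ := ⨅ n, a n
def DD (t : ℕ) : ℕ := (t + 1) ^ 4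
noncomputable def uu (t j : ℕ) : ℕ := ⌊(DD t : ℝ) * hh a j⌋₊
noncomputable def Gsum (t k : ℕ) : ℕ := ∑ j ∈ Finset.range (t + 1), uu a t j * (j + 1 - k)
noncomputable def QQ (t : ℕ) : ℕ := Gsum a t 0
noncomputable def ZZ (t : ℕ) : ℕ := ⌈((QQ a t : ℝ) + 1) * LL a / (1 - LL a)⌉₊

section hyps

variable (hmono : ∀ i : ℕ, a (i + 1) ≤ a i)
  (hconv : ∀ i : ℕ, 0 ≤ a i - 2 * a (i + 1) + a (i + 2))
  (ha0 : a 0 = 1) (hpos : ∀ n, 0 ≤ a n)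

include hmono in
lemma a_anti : Antitone a := antitone_nat_of_succ_le hmono

include hpos in
lemma range_bdd : BddBelow (Set.range a) := ⟨0, fun y ⟨n, hn⟩ => hn ▸ hpos n⟩

include hmono hpos in
lemma a_tendsto : Tendsto a atTop (𝓝 (LL a)) :=
  tendsto_atTop_ciInf (antitone_nat_of_succ_le hmono) (range_bdd a hpos)

include hpos in
lemma LL_nonneg : 0 ≤ LL a := le_ciInf fun n => hpos n

include hpos in
lemma LL_le (k : ℕ) : LL a ≤ a k := ciInf_le (range_bdd a hpos) k

include hmono ha0 in
lemma a_le_one (k : ℕ) : a k ≤ 1 := by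
  have := (antitone_nat_of_succ_le hmono) (Nat.zero_le k)
  rwa [ha0] at this

include hmono in
lemma dd_nonneg (j : ℕ) : 0 ≤ dd a j := by
  have := hmono j; unfold dd; linarith

include hconv in
lemma hh_nonneg (j : ℕ) : 0 ≤ hh a j := by
  have := hconv j; unfold hh dd; linarith

include hconv in
lemma dd_anti : Antitone (dd a) := by
  apply antitone_nat_of_succ_le
  intro n
  have := hh_nonneg a hconv n
  unfold hh at this
  linarith

lemma sum_dd (k M : ℕ) : ∑ i ∈ Finset.range M, dd a (k + i) = a k - a (k + M) := by
  induction M with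
  | zero => simp
  | succ M ih =>
    rw [Finset.sum_range_succ, ih]
    unfold dd
    rw [show k + M + 1 = k + (M + 1) by omega]
    ring

lemma sum_ih (k M : ℕ) :
    ∑ i ∈ Finset.range M, ((i : ℝ) + 1) * hh a (k + i)
      = (∑ i ∈ Finset.range M, dd a (k + i)) - M * dd a (k + M) := by
  induction M with
  | zero => simp
  | succ M ih =>
    rw [Finset.sum_range_succ, ih, Finset.sum_range_succ]
    unfold hh
    rw [show k + M + 1 = k + (M + 1) by omega]
    push_cast
    ring

lemma tendsto_succ : Tendsto (fun t : ℕ => t + 1) atTop atTop :=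
  tendsto_atTop_atTop.2 fun b => ⟨b, fun n hn => by omega⟩

lemma tendsto_half : Tendsto (fun t : ℕ => t / 2) atTop atTop :=
  tendsto_atTop_atTop.2 fun b => ⟨2 * b, fun n hn => by omega⟩

include hmono hconv hpos in
lemma tendsto_mul_dd : Tendsto (fun t : ℕ => (t : ℝ) * dd a t) atTop (𝓝 0) := by
  apply squeeze_zero (g := fun t : ℕ => 3 * (a (t / 2) - a t))
  · intro t
    exact mul_nonneg (Nat.cast_nonneg t) (dd_nonneg a hmono t)
  · intro t
    rcases Nat.eq_zero_or_pos t with rfl | ht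
    · simp
    · -- (t - t/2) * dd t ≤ a (t/2) - a t
      have hsum : ∑ i ∈ Finset.range (t - t / 2), dd a (t / 2 + i) = a (t / 2) - a t := by
        rw [sum_dd a (t / 2) (t - t / 2), show t / 2 + (t - t / 2) = t by omega]
      have hterm : ∀ i ∈ Finset.range (t - t / 2), dd a t ≤ dd a (t / 2 + i) := by
        intro i hi
        simp only [Finset.mem_range] at hi
        exact dd_anti a hconv (by omega)
      have hlow : ((t - t / 2 : ℕ) : ℝ) * dd a t ≤ a (t / 2) - a t := by
        rw [← hsum]
        calc ((t - t / 2 : ℕ) : ℝ) * dd a t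
            = ∑ _i ∈ Finset.range (t - t / 2), dd a t := by
              rw [Finset.sum_const, Finset.card_range, nsmul_eq_mul]
          _ ≤ _ := Finset.sum_le_sum hterm
      have hcoeff : (t : ℝ) ≤ 3 * ((t - t / 2 : ℕ) : ℝ) := by
        have : t ≤ 3 * (t - t / 2) := by omega
        exact_mod_cast this
      calc (t : ℝ) * dd a t ≤ 3 * ((t - t / 2 : ℕ) : ℝ) * dd a t :=
            mul_le_mul_of_nonneg_right hcoeff (dd_nonneg a hmono t)
        _ ≤ 3 * (a (t / 2) - a t) := by
            rw [mul_assoc]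
            exact mul_le_mul_of_nonneg_left hlow (by norm_num)
  · have h1 : Tendsto (fun t : ℕ => a (t / 2)) atTop (𝓝 (LL a)) :=
      (a_tendsto a hmono hpos).comp tendsto_half
    have h2 := (h1.sub (a_tendsto a hmono hpos)).const_mul (3 : ℝ)
    simpa using h2

lemma sumG_eq (u : ℕ → ℕ) (t k : ℕ) (hkt : k ≤ t + 1) :
    ∑ j ∈ Finset.range (t + 1), u j * (j + 1 - k)
      = ∑ i ∈ Finset.range (t + 1 - k), u (k + i) * (i + 1) := by
  rw [Finset.range_eq_Ico, ← Finset.sum_Ico_consecutive _ (Nat.zero_le k) hkt]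
  have h1 : ∑ j ∈ Finset.Ico 0 k, u j * (j + 1 - k) = 0 := by
    apply Finset.sum_eq_zero
    intro j hj
    simp only [Finset.mem_Ico] at hj
    have : j + 1 - k = 0 := by omega
    rw [this, Nat.mul_zero]
  rw [h1, Nat.zero_add, Finset.sum_Ico_eq_sum_range]
  apply Finset.sum_congr rfl
  intro i _
  congr 1
  omega

include hmono hconv hpos in
lemma G_div_tendsto (k : ℕ) :
    Tendsto (fun t => (Gsum a t k : ℝ) / DD t) atTop (𝓝 (a k - LL a)) := by
  set W : ℕ → ℝ := fun t => (a k - a (t + 1)) - ((t + 1 - k : ℕ) : ℝ) * dd a (t + 1) with hW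
  have hWt : Tendsto W atTop (𝓝 (a k - LL a)) := by
    have h1 : Tendsto (fun t : ℕ => a k - a (t + 1)) atTop (𝓝 (a k - LL a)) :=
      tendsto_const_nhds.sub ((a_tendsto a hmono hpos).comp tendsto_succ)
    have h2 : Tendsto (fun t : ℕ => ((t + 1 - k : ℕ) : ℝ) * dd a (t + 1)) atTop (𝓝 0) := by
      apply squeeze_zero
      · intro t
        exact mul_nonneg (Nat.cast_nonneg _) (dd_nonneg a hmono _)
      · intro t
        show ((t + 1 - k : ℕ) : ℝ) * dd a (t + 1) ≤ ((t + 1 : ℕ) : ℝ) * dd a (t + 1)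
        apply mul_le_mul_of_nonneg_right _ (dd_nonneg a hmono _)
        exact_mod_cast Nat.sub_le _ _
      · exact (tendsto_mul_dd a hmono hconv hpos).comp tendsto_succ
    simpa using h1.sub h2
  have hdiff : Tendsto (fun t => (Gsum a t k : ℝ) / DD t - W t) atTop (𝓝 0) := by
    apply squeeze_zero_norm' (a := fun t : ℕ => ((t : ℝ) + 1) ^ 2 / ((t : ℝ) + 1) ^ 4)
    · filter_upwards [eventually_ge_atTop k] with t hkt
      have hkt1 : k ≤ t + 1 := by omega
      have hDpos : (0 : ℝ) < DD t := by
        have : (0 : ℕ) < DD t := pow_pos (Nat.succ_pos t) 4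
        exact_mod_cast this
      -- rewrite Gsum
      have hG : (Gsum a t k : ℝ)
          = ∑ i ∈ Finset.range (t + 1 - k), (uu a t (k + i) : ℝ) * ((i : ℝ) + 1) := by
        rw [Gsum, sumG_eq _ _ _ hkt1]
        push_cast
        rfl
      -- W as a sum
      have hWsum : W t = ∑ i ∈ Finset.range (t + 1 - k), ((i : ℝ) + 1) * hh a (k + i) := by
        rw [sum_ih, sum_dd, hW]
        rw [show k + (t + 1 - k) = t + 1 by omega]
      have hterm : ∀ i ∈ Finset.range (t + 1 - k),
          |(uu a t (k + i) : ℝ) - (DD t : ℝ) * hh a (k + i)| ≤ 1 := by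
        intro i _
        have hnn : 0 ≤ (DD t : ℝ) * hh a (k + i) :=
          mul_nonneg hDpos.le (hh_nonneg a hconv _)
        have h1 := Nat.floor_le hnn
        have h2 := Nat.lt_floor_add_one ((DD t : ℝ) * hh a (k + i))
        rw [uu]
        rw [abs_le]
        constructor <;> nlinarith
      rw [Real.norm_eq_abs]
      have hsplit : (∑ i ∈ Finset.range (t + 1 - k),
              ((uu a t (k + i) : ℝ) - (DD t : ℝ) * hh a (k + i)) * ((i : ℝ) + 1))
          = (∑ i ∈ Finset.range (t + 1 - k), (uu a t (k + i) : ℝ) * ((i : ℝ) + 1))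
            - (DD t : ℝ) * ∑ i ∈ Finset.range (t + 1 - k), ((i : ℝ) + 1) * hh a (k + i) := by
        rw [Finset.mul_sum, ← Finset.sum_sub_distrib]
        apply Finset.sum_congr rfl
        intro i _
        ring
      have hexp : (Gsum a t k : ℝ) / DD t - W t
          = (∑ i ∈ Finset.range (t + 1 - k),
              ((uu a t (k + i) : ℝ) - (DD t : ℝ) * hh a (k + i)) * ((i : ℝ) + 1)) / DD t := by
        rw [hsplit, sub_div, hG, hWsum]
        congr 1
        rw [mul_comm, mul_div_assoc, div_self (ne_of_gt hDpos), mul_one]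
      rw [hexp]
      have habs : |(∑ i ∈ Finset.range (t + 1 - k),
              ((uu a t (k + i) : ℝ) - (DD t : ℝ) * hh a (k + i)) * ((i : ℝ) + 1))|
          ≤ ((t : ℝ) + 1) ^ 2 := by
        calc |(∑ i ∈ Finset.range (t + 1 - k),
              ((uu a t (k + i) : ℝ) - (DD t : ℝ) * hh a (k + i)) * ((i : ℝ) + 1))|
            ≤ ∑ i ∈ Finset.range (t + 1 - k),
              |((uu a t (k + i) : ℝ) - (DD t : ℝ) * hh a (k + i)) * ((i : ℝ) + 1)| :=
              Finset.abs_sum_le_sum_abs _ _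
          _ ≤ ∑ _i ∈ Finset.range (t + 1 - k), ((t : ℝ) + 1) := by
              apply Finset.sum_le_sum
              intro i hi
              simp only [Finset.mem_range] at hi
              rw [abs_mul]
              have h1 := hterm i (by simpa using hi)
              have h2 : |(i : ℝ) + 1| ≤ (t : ℝ) + 1 := by
                rw [abs_of_nonneg (by positivity)]
                have : (i : ℝ) ≤ t := by exact_mod_cast Nat.le_of_lt_succ (by omega)
                linarith
              calc |(uu a t (k + i) : ℝ) - (DD t : ℝ) * hh a (k + i)| * |(i : ℝ) + 1|
                  ≤ 1 * ((t : ℝ) + 1) := by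
                    apply mul_le_mul h1 h2 (abs_nonneg _) zero_le_one
                _ = (t : ℝ) + 1 := one_mul _
          _ ≤ ((t : ℝ) + 1) ^ 2 := by
              rw [Finset.sum_const, Finset.card_range, nsmul_eq_mul]
              have h3 : ((t + 1 - k : ℕ) : ℝ) ≤ (t : ℝ) + 1 := by
                exact_mod_cast Nat.sub_le _ _
              have h4 : (0 : ℝ) ≤ (t : ℝ) + 1 := by positivity
              nlinarith
      have hDD : (DD t : ℝ) = ((t : ℝ) + 1) ^ 4 := by
        rw [DD]; push_cast; ring
      rw [abs_div, abs_of_nonneg hDpos.le]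
      calc |∑ i ∈ Finset.range (t + 1 - k),
              ((uu a t (k + i) : ℝ) - (DD t : ℝ) * hh a (k + i)) * ((i : ℝ) + 1)| / (DD t : ℝ)
          ≤ ((t : ℝ) + 1) ^ 2 / (DD t : ℝ) := by gcongr
        _ = ((t : ℝ) + 1) ^ 2 / ((t : ℝ) + 1) ^ 4 := by rw [hDD]
    · have h1 : Tendsto (fun t : ℕ => (t : ℝ) + 1) atTop atTop :=
        tendsto_atTop_add_const_right atTop 1 tendsto_natCast_atTop_atTop
      have hpow : Tendsto (fun t : ℕ => ((t : ℝ) + 1) ^ 2) atTop atTop :=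
        (tendsto_pow_atTop (two_ne_zero)).comp h1
      have hinv : Tendsto (fun t : ℕ => (((t : ℝ) + 1) ^ 2)⁻¹) atTop (𝓝 0) :=
        tendsto_inv_atTop_zero.comp hpow
      apply hinv.congr
      intro t
      have h2 : ((t : ℝ) + 1) ≠ 0 := by positivity
      field_simp
  have := hdiff.add hWt
  simpa using this

include ha0 hmono hconv hpos in
lemma Q_div_tendsto : Tendsto (fun t => (QQ a t : ℝ) / DD t) atTop (𝓝 (1 - LL a)) := by
  have h := G_div_tendsto a hmono hconv hpos 0
  rw [ha0] at h
  exact h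

lemma one_div_DD_tendsto : Tendsto (fun t : ℕ => 1 / (DD t : ℝ)) atTop (𝓝 0) := by
  have h1 : Tendsto (fun t : ℕ => (t : ℝ) + 1) atTop atTop :=
    tendsto_atTop_add_const_right atTop 1 tendsto_natCast_atTop_atTop
  have hpow : Tendsto (fun t : ℕ => ((t : ℝ) + 1) ^ 4) atTop atTop :=
    (tendsto_pow_atTop (by norm_num)).comp h1
  have hinv : Tendsto (fun t : ℕ => (((t : ℝ) + 1) ^ 4)⁻¹) atTop (𝓝 0) :=
    tendsto_inv_atTop_zero.comp hpow
  apply hinv.congr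
  intro t
  rw [one_div]
  congr 1
  rw [DD]
  push_cast
  ring

lemma DD_pos_real (t : ℕ) : (0 : ℝ) < (DD t : ℝ) := by
  have : (0 : ℕ) < DD t := pow_pos (Nat.succ_pos t) 4
  exact_mod_cast this

include ha0 hmono hconv hpos in
lemma Z_div_tendsto (hL1 : LL a < 1) :
    Tendsto (fun t => (ZZ a t : ℝ) / DD t) atTop (𝓝 (LL a)) := by
  set c : ℝ := LL a / (1 - LL a) with hc
  have hLnn := LL_nonneg a hpos
  have hcnn : 0 ≤ c := div_nonneg hLnn (by linarith)
  have key : ∀ t, |(ZZ a t : ℝ) - ((QQ a t : ℝ) + 1) * c| ≤ 1 := by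
    intro t
    have hynn : 0 ≤ ((QQ a t : ℝ) + 1) * c :=
      mul_nonneg (by positivity) hcnn
    have hy : ((QQ a t : ℝ) + 1) * c = ((QQ a t : ℝ) + 1) * LL a / (1 - LL a) := by
      rw [hc, mul_div_assoc]
    have h1 := Nat.le_ceil (((QQ a t : ℝ) + 1) * c)
    have h2 := Nat.ceil_lt_add_one hynn
    rw [hy] at h1 h2
    rw [ZZ, ← hy, hy]
    rw [abs_le]
    constructor <;> [linarith [h2]; linarith [h1]]
  have h1 : Tendsto (fun t => ((QQ a t : ℝ) + 1) * c / DD t) atTop (𝓝 ((1 - LL a) * c)) := by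
    have hq := (Q_div_tendsto a hmono hconv ha0 hpos).add
      (one_div_DD_tendsto)
    have := hq.mul_const c
    rw [add_zero] at this
    apply this.congr
    intro t
    field_simp
    try ring
  have h2 : Tendsto (fun t => (ZZ a t : ℝ) / DD t - ((QQ a t : ℝ) + 1) * c / DD t) atTop (𝓝 0) := by
    apply squeeze_zero_norm' (a := fun t : ℕ => 1 / (DD t : ℝ))
    · filter_upwards with t
      rw [Real.norm_eq_abs, div_sub_div_same, abs_div,
        abs_of_nonneg (DD_pos_real t).le]
      gcongr
      exact key t
    · exact one_div_DD_tendsto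
  have hfin := h2.add h1
  have hval : (1 - LL a) * c = LL a := by
    have hne : (1:ℝ) - LL a ≠ 0 := ne_of_gt (by linarith)
    rw [hc, mul_comm]
    exact div_mul_cancel₀ (LL a) hne
  rw [zero_add, hval] at hfin
  apply hfin.congr
  intro t
  ring

include ha0 hmono hconv hpos in
lemma ZZk_div_tendsto (hL1 : LL a < 1) (k : ℕ) :
    Tendsto (fun t => ((ZZ a t + 1 - k : ℕ) : ℝ) / DD t) atTop (𝓝 (LL a)) := by
  have hZ := Z_div_tendsto a hmono hconv ha0 hpos hL1
  have h2 : Tendsto (fun t => ((ZZ a t + 1 - k : ℕ) : ℝ) / DD t - (ZZ a t : ℝ) / DD t)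
      atTop (𝓝 0) := by
    apply squeeze_zero_norm' (a := fun t : ℕ => ((k : ℝ) + 1) / (DD t : ℝ))
    · filter_upwards with t
      rw [Real.norm_eq_abs, div_sub_div_same, abs_div, abs_of_nonneg (DD_pos_real t).le]
      gcongr
      have hle : (ZZ a t + 1 - k : ℕ) ≤ ZZ a t + 1 := by omega
      have hge : ZZ a t ≤ (ZZ a t + 1 - k : ℕ) + k := by omega
      have c1 : ((ZZ a t + 1 - k : ℕ) : ℝ) ≤ (ZZ a t : ℝ) + 1 := by exact_mod_cast hle
      have c2 : (ZZ a t : ℝ) ≤ ((ZZ a t + 1 - k : ℕ) : ℝ) + k := by exact_mod_cast hge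
      rw [abs_le]
      constructor <;> linarith
    · have := one_div_DD_tendsto.const_mul ((k : ℝ) + 1)
      rw [mul_zero] at this
      apply this.congr
      intro t
      rw [one_div]
      ring
  have := h2.add hZ
  rw [zero_add] at this
  apply this.congr
  intro t
  ring

end hyps

/-! ### Construction of the generic point -/

noncomputable def Pat (t : ℕ) : List Bool := Pword (uu a t) (t + 1) (ZZ a t)

noncomputable def lenP (t : ℕ) : ℕ := (Pat a t).length

lemma lenP_pos (t : ℕ) : 0 < lenP a t := length_Pword_pos _ _ _

noncomputable def NN : ℕ → ℕ
  | 0 => 0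
  | t + 1 => NN t + (t * NN t + (t + 1) * lenP a (t + 1) + 1) * lenP a t

noncomputable def RRv (t : ℕ) : ℕ := t * NN a t + (t + 1) * lenP a (t + 1) + 1

lemma NN_succ (t : ℕ) : NN a (t + 1) = NN a t + RRv a t * lenP a t := rfl

lemma RRv_pos (t : ℕ) : 0 < RRv a t := by unfold RRv; omega

lemma NN_lt_succ (t : ℕ) : NN a t < NN a (t + 1) := by
  rw [NN_succ]
  have h1 := RRv_pos a t
  have h2 := lenP_pos a t
  have h3 : 0 < RRv a t * lenP a t := Nat.mul_pos h1 h2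
  omega

lemma NN_mono : Monotone (NN a) := monotone_nat_of_le_succ fun t => (NN_lt_succ a t).le

lemma NN_le_self (t : ℕ) : t ≤ NN a t := by
  induction t with
  | zero => exact le_rfl
  | succ t ih => have := NN_lt_succ a t; omega

lemma NN_ge_mul (t : ℕ) (ht : 1 ≤ t) : t * lenP a t ≤ NN a t := by
  obtain ⟨s, rfl⟩ : ∃ s, t = s + 1 := ⟨t - 1, by omega⟩
  rw [NN_succ]
  have h1 : (s + 1) * lenP a (s + 1) ≤ RRv a s := by unfold RRv; omega
  have h2 : RRv a s ≤ RRv a s * lenP a s :=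
    Nat.le_mul_of_pos_right _ (lenP_pos a s)
  omega

lemma NN_eq_sum (t : ℕ) : NN a t = ∑ s ∈ Finset.range t, RRv a s * lenP a s := by
  induction t with
  | zero => rfl
  | succ t ih => rw [NN_succ, ih, Finset.sum_range_succ]

open scoped Classical in
noncomputable def stage (n : ℕ) : ℕ := Nat.findGreatest (fun t => NN a t ≤ n) n

lemma NN_stage_le (n : ℕ) : NN a (stage a n) ≤ n := by
  classical
  rcases Nat.eq_zero_or_pos (stage a n) with h | h
  · rw [h]; exact Nat.zero_le n
  · have h3 : (fun t => NN a t ≤ n) (stage a n) :=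
      Nat.findGreatest_of_ne_zero (P := fun t => NN a t ≤ n) (n := n) (m := stage a n) rfl
        (by omega)
    exact h3

lemma lt_NN_stage (n : ℕ) : n < NN a (stage a n + 1) := by
  classical
  by_contra hcon
  push_neg at hcon
  have hle : stage a n + 1 ≤ n := le_trans (NN_le_self a _) hcon
  exact Nat.findGreatest_is_greatest (Nat.lt_succ_self _) hle hcon

lemma stage_ge (T n : ℕ) (h : NN a T ≤ n) : T ≤ stage a n := by
  classical
  exact Nat.le_findGreatest (le_trans (NN_le_self a T) h) h

lemma stage_eq (t n : ℕ) (h1 : NN a t ≤ n) (h2 : n < NN a (t + 1)) : stage a n = t := by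
  classical
  apply le_antisymm
  · by_contra hcon
    push_neg at hcon
    have h3 : NN a (t + 1) ≤ NN a (stage a n) := NN_mono a hcon
    have h4 := NN_stage_le a n
    omega
  · exact stage_ge a t n h1

/-- The generic point. -/
noncomputable def xx : ℕ → Bool := fun n =>
  (Pat a (stage a n)).getD ((n - NN a (stage a n)) % lenP a (stage a n)) true

lemma xx_eq (t c q : ℕ) (hc : c < RRv a t) (hq : q < lenP a t) :
    xx a (NN a t + c * lenP a t + q) = (Pat a t).getD q true := by
  set n := NN a t + c * lenP a t + q with hn
  have h1 : NN a t ≤ n := by omega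
  have h2 : n < NN a (t + 1) := by
    rw [NN_succ]
    have h3 : (c + 1) * lenP a t ≤ RRv a t * lenP a t :=
      Nat.mul_le_mul_right _ (by omega)
    have h4 : c * lenP a t + q < (c + 1) * lenP a t := by
      rw [add_mul, one_mul]; omega
    omega
  have hst : stage a n = t := stage_eq a t n h1 h2
  show (Pat a (stage a n)).getD ((n - NN a (stage a n)) % lenP a (stage a n)) true
    = (Pat a t).getD q true
  rw [hst]
  have h4 : n - NN a t = c * lenP a t + q := by omega
  rw [h4, Nat.mul_add_mod', Nat.mod_eq_of_lt hq]

lemma Scount_copy (k : ℕ) (hk : 1 ≤ k) (t c : ℕ) (hc : c < RRv a t) :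
    Scount (xx a) k (NN a t + (c + 1) * lenP a t)
      = Scount (xx a) k (NN a t + c * lenP a t) + cnt k (Pat a t) := by
  have hw : ∀ q < (Pat a t).length,
      xx a ((NN a t + c * lenP a t) + q) = (Pat a t).getD q true := by
    intro q hq
    exact xx_eq a t c q hc hq
  have h := Scount_add_word (xx a) k hk (NN a t + c * lenP a t) (Pat a t) hw (ET_Pword _ _ _)
  rw [show (Pat a t).length = lenP a t from rfl] at h
  rw [show NN a t + c * lenP a t + lenP a t = NN a t + (c + 1) * lenP a t by ring] at h
  exact h

lemma Scount_block (k : ℕ) (hk : 1 ≤ k) (t : ℕ) :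
    ∀ c, c ≤ RRv a t →
      Scount (xx a) k (NN a t + c * lenP a t)
        = Scount (xx a) k (NN a t) + c * cnt k (Pat a t) := by
  intro c
  induction c with
  | zero => intro _; simp
  | succ c ih =>
    intro hc
    rw [Scount_copy a k hk t c (by omega), ih (by omega)]
    ring

lemma Scount_NN (k : ℕ) (hk : 1 ≤ k) (t : ℕ) :
    Scount (xx a) k (NN a t) = ∑ s ∈ Finset.range t, RRv a s * cnt k (Pat a s) := by
  induction t with
  | zero => simp [Scount, NN]
  | succ t ih =>
    rw [NN_succ, Scount_block a k hk t (RRv a t) le_rfl, ih, Finset.sum_range_succ]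

lemma cnt_Pat (k : ℕ) (hk : 1 ≤ k) (t : ℕ) :
    cnt k (Pat a t) = Gsum a t k + (ZZ a t + 1 - k) := by
  rw [Pat, cnt_Pword k hk, Gsum]

lemma lenP_eq (t : ℕ) : lenP a t = Gsum a t 0 + (ZZ a t + 1 - 0) := by
  rw [lenP, Pat, length_Pword, Gsum]
  simp only [Nat.sub_zero]

section hyps2

variable (hmono : ∀ i : ℕ, a (i + 1) ≤ a i)
  (hconv : ∀ i : ℕ, 0 ≤ a i - 2 * a (i + 1) + a (i + 2))
  (ha0 : a 0 = 1) (hpos : ∀ n, 0 ≤ a n)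

include hmono hconv ha0 hpos in
lemma psi_tendsto (hL1 : LL a < 1) (k : ℕ) (hk : 1 ≤ k) :
    Tendsto (fun t => (cnt k (Pat a t) : ℝ) / lenP a t) atTop (𝓝 (a k)) := by
  have hcnt : Tendsto (fun t => (cnt k (Pat a t) : ℝ) / DD t) atTop (𝓝 (a k)) := by
    have h1 := (G_div_tendsto a hmono hconv hpos k).add
      (ZZk_div_tendsto a hmono hconv ha0 hpos hL1 k)
    rw [show a k - LL a + LL a = a k by ring] at h1
    apply h1.congr
    intro t
    rw [cnt_Pat a k hk]
    push_cast
    ring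
  have hlen : Tendsto (fun t => (lenP a t : ℝ) / DD t) atTop (𝓝 1) := by
    have h1 := (G_div_tendsto a hmono hconv hpos 0).add
      (ZZk_div_tendsto a hmono hconv ha0 hpos hL1 0)
    rw [ha0, show (1 : ℝ) - LL a + LL a = 1 by ring] at h1
    apply h1.congr
    intro t
    rw [lenP_eq]
    push_cast
    ring
  have h2 := hcnt.div hlen one_ne_zero
  rw [div_one] at h2
  apply h2.congr
  intro t
  exact div_div_div_cancel_right₀ (ne_of_gt (DD_pos_real t)) _ _

include hmono hconv ha0 hpos in
lemma main_tendsto (hL1 : LL a < 1) (k : ℕ) (hk : 1 ≤ k) :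
    Tendsto (fun n => (Scount (xx a) k n : ℝ) / n) atTop (𝓝 (a k)) := by
  have hak0 : 0 ≤ a k := hpos k
  have hak1 : a k ≤ 1 := a_le_one a hmono ha0 k
  have hψ := psi_tendsto a hmono hconv ha0 hpos hL1 k hk
  rw [Metric.tendsto_atTop] at hψ ⊢
  intro ε hε
  obtain ⟨T₁, hT₁⟩ := hψ (ε / 4) (by positivity)
  set T : ℕ := max T₁ (⌈(8 : ℝ) / ε⌉₊ + 1) with hTdef
  have hT1 : 1 ≤ T := le_trans (by omega) (le_max_right _ _)
  have hTT₁ : T₁ ≤ T := le_max_left _ _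
  have hTbig : (8 : ℝ) ≤ ε * T := by
    have h1 : (⌈(8 : ℝ) / ε⌉₊ + 1 : ℕ) ≤ T := le_max_right _ _
    have h1' : ((⌈(8 : ℝ) / ε⌉₊ + 1 : ℕ) : ℝ) ≤ (T : ℝ) := by exact_mod_cast h1
    have h2 := Nat.le_ceil ((8 : ℝ) / ε)
    have h3 : (8 : ℝ) / ε ≤ (T : ℝ) := by push_cast at h1'; linarith
    rw [div_le_iff₀ hε] at h3
    linarith [h3]
  -- the threshold for n
  refine ⟨max (NN a T) (⌈(8 : ℝ) * ((NN a T : ℝ) + 1) / ε⌉₊ + 1), fun n hn => ?_⟩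
  have hnNT : NN a T ≤ n := le_trans (le_max_left _ _) hn
  have hn1 : 1 ≤ n := by
    have := le_trans (le_max_right _ _) hn; omega
  have hnR : (0 : ℝ) < (n : ℝ) := by exact_mod_cast hn1
  have hnbig : (8 : ℝ) * ((NN a T : ℝ) + 1) ≤ ε * n := by
    have h1 : (⌈(8 : ℝ) * ((NN a T : ℝ) + 1) / ε⌉₊ + 1 : ℕ) ≤ n := le_trans (le_max_right _ _) hn
    have h1' : ((⌈(8 : ℝ) * ((NN a T : ℝ) + 1) / ε⌉₊ : ℕ) : ℝ) ≤ (n : ℝ) := by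
      have : ((⌈(8 : ℝ) * ((NN a T : ℝ) + 1) / ε⌉₊ + 1 : ℕ) : ℝ) ≤ (n : ℝ) := by exact_mod_cast h1
      push_cast at this ⊢
      linarith
    have h2 := Nat.le_ceil ((8 : ℝ) * ((NN a T : ℝ) + 1) / ε)
    have h3 : (8 : ℝ) * ((NN a T : ℝ) + 1) / ε ≤ (n : ℝ) := le_trans h2 h1'
    rw [div_le_iff₀ hε] at h3
    linarith
  set t := stage a n with htdef
  have hTt : T ≤ t := stage_ge a T n hnNT
  have ht1 : 1 ≤ t := le_trans hT1 hTt
  have hNn : NN a t ≤ n := NN_stage_le a n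
  have hnlt : n < NN a (t + 1) := lt_NN_stage a n
  have hLpos : 0 < lenP a t := lenP_pos a t
  set c : ℕ := (n - NN a t) / lenP a t with hcdef
  set s₀ : ℕ := (n - NN a t) % lenP a t with hs0def
  have hdm : c * lenP a t + s₀ = n - NN a t := by
    have h := Nat.div_add_mod (n - NN a t) (lenP a t)
    rw [← hcdef, ← hs0def, Nat.mul_comm] at h
    exact h
  have hs0lt : s₀ < lenP a t := Nat.mod_lt _ hLpos
  have hcR : c < RRv a t := by
    have h1 : n - NN a t < RRv a t * lenP a t := by
      rw [NN_succ] at hnlt; omega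
    by_contra hcon
    push_neg at hcon
    have h2 : RRv a t * lenP a t ≤ c * lenP a t := Nat.mul_le_mul_right _ hcon
    omega
  set Ncp : ℕ := NN a t + c * lenP a t with hNcpdef
  have hNcpn : Ncp + s₀ = n := by omega
  have hSN : Scount (xx a) k Ncp
      = (∑ s ∈ Finset.range t, RRv a s * cnt k (Pat a s)) + c * cnt k (Pat a t) := by
    rw [hNcpdef, Scount_block a k hk t c hcR.le, Scount_NN a k hk t]
  obtain ⟨hmon1, hmon2⟩ := Scount_le_add (xx a) k Ncp n (by omega)
  -- term estimates
  have h_est_triv : ∀ s : ℕ, |(cnt k (Pat a s) : ℝ) - a k * lenP a s| ≤ (lenP a s : ℝ) := by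
    intro s
    have h1 : (cnt k (Pat a s) : ℝ) ≤ (lenP a s : ℝ) := by
      exact_mod_cast cnt_le_length k (Pat a s)
    have h2 : (0 : ℝ) ≤ (cnt k (Pat a s) : ℝ) := Nat.cast_nonneg _
    have h3 : (0 : ℝ) ≤ (lenP a s : ℝ) := Nat.cast_nonneg _
    rw [abs_le]
    constructor <;> nlinarith
  have h_est_small : ∀ s : ℕ, T ≤ s →
      |(cnt k (Pat a s) : ℝ) - a k * lenP a s| ≤ ε / 4 * lenP a s := by
    intro s hs
    have hd := hT₁ s (le_trans hTT₁ hs)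
    rw [Real.dist_eq] at hd
    have hlpos : (0 : ℝ) < (lenP a s : ℝ) := by exact_mod_cast lenP_pos a s
    have heq : (cnt k (Pat a s) : ℝ) - a k * lenP a s
        = ((cnt k (Pat a s) : ℝ) / lenP a s - a k) * lenP a s := by
      field_simp
    rw [heq, abs_mul, abs_of_nonneg hlpos.le]
    exact mul_le_mul_of_nonneg_right hd.le hlpos.le
  -- main sum estimate at the checkpoint
  have hNcp_sum : (Ncp : ℝ)
      = (∑ s ∈ Finset.range t, (RRv a s : ℝ) * (lenP a s : ℝ)) + (c : ℝ) * (lenP a t : ℝ) := by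
    rw [hNcpdef, NN_eq_sum a t]
    push_cast
    ring
  have hSNr : (Scount (xx a) k Ncp : ℝ)
      = (∑ s ∈ Finset.range t, (RRv a s : ℝ) * (cnt k (Pat a s) : ℝ))
        + (c : ℝ) * (cnt k (Pat a t) : ℝ) := by
    rw [hSN]
    push_cast
    ring
  have hdiff_eq : (Scount (xx a) k Ncp : ℝ) - a k * Ncp
      = (∑ s ∈ Finset.range t, (RRv a s : ℝ) * ((cnt k (Pat a s) : ℝ) - a k * lenP a s))
        + (c : ℝ) * ((cnt k (Pat a t) : ℝ) - a k * lenP a t) := by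
    have e2 : (∑ s ∈ Finset.range t, (RRv a s : ℝ) * ((cnt k (Pat a s) : ℝ) - a k * lenP a s))
        = (∑ s ∈ Finset.range t, (RRv a s : ℝ) * (cnt k (Pat a s) : ℝ))
          - a k * ∑ s ∈ Finset.range t, (RRv a s : ℝ) * (lenP a s : ℝ) := by
      rw [Finset.mul_sum, ← Finset.sum_sub_distrib]
      apply Finset.sum_congr rfl
      intro s _
      ring
    rw [hSNr, hNcp_sum, e2]
    ring
  -- split the sum at T
  have hsplit : (∑ s ∈ Finset.range t, (RRv a s : ℝ) * ((cnt k (Pat a s) : ℝ) - a k * lenP a s))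
      = (∑ s ∈ Finset.range T, (RRv a s : ℝ) * ((cnt k (Pat a s) : ℝ) - a k * lenP a s))
        + ∑ s ∈ Finset.Ico T t, (RRv a s : ℝ) * ((cnt k (Pat a s) : ℝ) - a k * lenP a s) := by
    rw [Finset.range_eq_Ico, ← Finset.sum_Ico_consecutive _ (Nat.zero_le T) hTt,
      ← Finset.range_eq_Ico]
  have hb1 : |∑ s ∈ Finset.range T, (RRv a s : ℝ) * ((cnt k (Pat a s) : ℝ) - a k * lenP a s)|
      ≤ (NN a T : ℝ) := by
    calc |∑ s ∈ Finset.range T, (RRv a s : ℝ) * ((cnt k (Pat a s) : ℝ) - a k * lenP a s)|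
        ≤ ∑ s ∈ Finset.range T, |(RRv a s : ℝ) * ((cnt k (Pat a s) : ℝ) - a k * lenP a s)| :=
          Finset.abs_sum_le_sum_abs _ _
      _ ≤ ∑ s ∈ Finset.range T, (RRv a s : ℝ) * (lenP a s : ℝ) := by
          apply Finset.sum_le_sum
          intro s _
          rw [abs_mul, abs_of_nonneg (Nat.cast_nonneg (RRv a s))]
          exact mul_le_mul_of_nonneg_left (h_est_triv s) (Nat.cast_nonneg _)
      _ = (NN a T : ℝ) := by rw [NN_eq_sum a T]; push_cast; ring
  have hb2 : |∑ s ∈ Finset.Ico T t, (RRv a s : ℝ) * ((cnt k (Pat a s) : ℝ) - a k * lenP a s)|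
      ≤ ε / 4 * ∑ s ∈ Finset.Ico T t, (RRv a s : ℝ) * (lenP a s : ℝ) := by
    calc |∑ s ∈ Finset.Ico T t, (RRv a s : ℝ) * ((cnt k (Pat a s) : ℝ) - a k * lenP a s)|
        ≤ ∑ s ∈ Finset.Ico T t, |(RRv a s : ℝ) * ((cnt k (Pat a s) : ℝ) - a k * lenP a s)| :=
          Finset.abs_sum_le_sum_abs _ _
      _ ≤ ∑ s ∈ Finset.Ico T t, (RRv a s : ℝ) * (ε / 4 * lenP a s) := by
          apply Finset.sum_le_sum
          intro s hs
          simp only [Finset.mem_Ico] at hs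
          rw [abs_mul, abs_of_nonneg (Nat.cast_nonneg (RRv a s))]
          exact mul_le_mul_of_nonneg_left (h_est_small s hs.1) (Nat.cast_nonneg _)
      _ = ε / 4 * ∑ s ∈ Finset.Ico T t, (RRv a s : ℝ) * (lenP a s : ℝ) := by
          rw [Finset.mul_sum]
          apply Finset.sum_congr rfl
          intro s _
          ring
  have hb3 : |(c : ℝ) * ((cnt k (Pat a t) : ℝ) - a k * lenP a t)|
      ≤ ε / 4 * ((c : ℝ) * (lenP a t : ℝ)) := by
    rw [abs_mul, abs_of_nonneg (Nat.cast_nonneg c)]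
    calc (c : ℝ) * |(cnt k (Pat a t) : ℝ) - a k * lenP a t|
        ≤ (c : ℝ) * (ε / 4 * lenP a t) :=
          mul_le_mul_of_nonneg_left (h_est_small t hTt) (Nat.cast_nonneg _)
      _ = ε / 4 * ((c : ℝ) * (lenP a t : ℝ)) := by ring
  have htail_le : (∑ s ∈ Finset.Ico T t, (RRv a s : ℝ) * (lenP a s : ℝ))
      + (c : ℝ) * (lenP a t : ℝ) ≤ (n : ℝ) := by
    have e3 : (∑ s ∈ Finset.Ico T t, (RRv a s : ℝ) * (lenP a s : ℝ))
        = (NN a t : ℝ) - (NN a T : ℝ) := by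
      have e4 : (∑ s ∈ Finset.range T, (RRv a s : ℝ) * (lenP a s : ℝ))
          + (∑ s ∈ Finset.Ico T t, (RRv a s : ℝ) * (lenP a s : ℝ))
          = ∑ s ∈ Finset.range t, (RRv a s : ℝ) * (lenP a s : ℝ) := by
        rw [Finset.range_eq_Ico, Finset.range_eq_Ico,
          ← Finset.sum_Ico_consecutive _ (Nat.zero_le T) hTt]
      have e5 : (NN a t : ℝ) = ∑ s ∈ Finset.range t, (RRv a s : ℝ) * (lenP a s : ℝ) := by
        rw [NN_eq_sum a t]; push_cast; ring
      have e6 : (NN a T : ℝ) = ∑ s ∈ Finset.range T, (RRv a s : ℝ) * (lenP a s : ℝ) := by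
        rw [NN_eq_sum a T]; push_cast; ring
      rw [e5, e6, ← e4]
      ring
    rw [e3]
    have h7 : (Ncp : ℝ) ≤ (n : ℝ) := by exact_mod_cast (by omega : Ncp ≤ n)
    rw [hNcp_sum] at h7
    have e6 : (NN a t : ℝ) = ∑ s ∈ Finset.range t, (RRv a s : ℝ) * (lenP a s : ℝ) := by
      rw [NN_eq_sum a t]; push_cast; ring
    have h8 : (0 : ℝ) ≤ (NN a T : ℝ) := Nat.cast_nonneg _
    rw [e6]
    linarith
  have hcheckpoint : |(Scount (xx a) k Ncp : ℝ) - a k * Ncp|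
      ≤ (NN a T : ℝ) + ε / 4 * n := by
    rw [hdiff_eq, hsplit]
    have htri : |((∑ s ∈ Finset.range T, (RRv a s : ℝ) * ((cnt k (Pat a s) : ℝ) - a k * lenP a s))
        + ∑ s ∈ Finset.Ico T t, (RRv a s : ℝ) * ((cnt k (Pat a s) : ℝ) - a k * lenP a s))
        + (c : ℝ) * ((cnt k (Pat a t) : ℝ) - a k * lenP a t)|
        ≤ |∑ s ∈ Finset.range T, (RRv a s : ℝ) * ((cnt k (Pat a s) : ℝ) - a k * lenP a s)|
          + |∑ s ∈ Finset.Ico T t, (RRv a s : ℝ) * ((cnt k (Pat a s) : ℝ) - a k * lenP a s)|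
          + |(c : ℝ) * ((cnt k (Pat a t) : ℝ) - a k * lenP a t)| :=
      (abs_add_le _ _).trans (by gcongr; exact abs_add_le _ _)
    have hsum_bound : ε / 4 * (∑ s ∈ Finset.Ico T t, (RRv a s : ℝ) * (lenP a s : ℝ))
        + ε / 4 * ((c : ℝ) * (lenP a t : ℝ)) ≤ ε / 4 * n := by
      rw [← mul_add]
      apply mul_le_mul_of_nonneg_left htail_le (by positivity)
    linarith [hb1, hb2, hb3, htri]
  -- from checkpoint to n
  have hfull : |(Scount (xx a) k n : ℝ) - a k * n|
      ≤ (NN a T : ℝ) + ε / 4 * n + 2 * lenP a t := by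
    have hθ : (n : ℝ) = (Ncp : ℝ) + (s₀ : ℝ) := by exact_mod_cast hNcpn.symm
    have hd1 : (Scount (xx a) k Ncp : ℝ) ≤ (Scount (xx a) k n : ℝ) := by exact_mod_cast hmon1
    have hd2 : (Scount (xx a) k n : ℝ) ≤ (Scount (xx a) k Ncp : ℝ) + (s₀ : ℝ) := by
      have : Scount (xx a) k n ≤ Scount (xx a) k Ncp + s₀ := by
        have := hmon2; omega
      exact_mod_cast this
    have hs0R : (s₀ : ℝ) ≤ (lenP a t : ℝ) := by exact_mod_cast hs0lt.le
    have hs0nn : (0 : ℝ) ≤ (s₀ : ℝ) := Nat.cast_nonneg _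
    have hXb := le_abs_self ((Scount (xx a) k Ncp : ℝ) - a k * Ncp)
    have hXb2 := neg_abs_le ((Scount (xx a) k Ncp : ℝ) - a k * Ncp)
    have hAs : (0 : ℝ) ≤ a k * s₀ := mul_nonneg hak0 hs0nn
    have habs2 : |(Scount (xx a) k n : ℝ) - a k * n|
        ≤ |(Scount (xx a) k Ncp : ℝ) - a k * Ncp| + (s₀ : ℝ) + a k * s₀ := by
      rw [abs_le]
      constructor
      · rw [hθ]; linarith [hd1, hd2, hXb, hXb2, hAs]
      · rw [hθ]; linarith [hd1, hd2, hXb, hXb2, hAs]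
    have hak_s0 : a k * s₀ ≤ (lenP a t : ℝ) := by nlinarith
    linarith [hcheckpoint, habs2, hs0R, hak_s0]
  -- conclude
  have hlen_n : (T : ℝ) * (lenP a t : ℝ) ≤ (n : ℝ) := by
    have h1 : T * lenP a t ≤ t * lenP a t := Nat.mul_le_mul_right _ hTt
    have h2 := NN_ge_mul a t ht1
    have : T * lenP a t ≤ n := by omega
    exact_mod_cast this
  have h2L : 8 * (lenP a t : ℝ) ≤ ε * n := by
    have hlnn : (0 : ℝ) ≤ (lenP a t : ℝ) := Nat.cast_nonneg _
    nlinarith [hTbig, hlen_n]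
  rw [Real.dist_eq]
  have heq2 : (Scount (xx a) k n : ℝ) / n - a k = ((Scount (xx a) k n : ℝ) - a k * n) / n := by
    field_simp
  rw [heq2, abs_div, abs_of_pos hnR, div_lt_iff₀ hnR]
  -- |S - a k n| < ε * n
  calc |(Scount (xx a) k n : ℝ) - a k * n| ≤ (NN a T : ℝ) + ε / 4 * n + 2 * lenP a t := hfull
    _ < ε * n := by nlinarith [hnbig, h2L, hnR]

end hyps2


end FreqAux

/-- **Theorem 1.4 (first part).** The set `R(a; {[0^n]}_{n≥1})` of points of `{0,1}^ℕ`
whose frequency of visits to the cylinder `[0^k]` equals `a_k` for every `k ≥ 1` is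
nonempty if and only if `1 = a_0 ≥ a_1 ≥ a_2 ≥ ⋯` and `a_i - 2a_{i+1} + a_{i+2} ≥ 0`
for all `i ≥ 0`. -/
theorem frequency_set_nonempty_iff (a : ℕ → ℝ) (ha0 : a 0 = 1) (hpos : ∀ n, 0 ≤ a n) :
    (∃ x : ℕ → Bool, ∀ k : ℕ, 1 ≤ k → hasFreq (List.replicate k false) x (a k)) ↔
      ((∀ i : ℕ, a (i + 1) ≤ a i) ∧ ∀ i : ℕ, 0 ≤ a i - 2 * a (i + 1) + a (i + 2)) := by
  constructor
  · rintro ⟨x, hx⟩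
    exact FreqAux.forward a ha0 x fun k hk => (FreqAux.hasFreq_iff x k (a k)).1 (hx k hk)
  · rintro ⟨hmono, hconv⟩
    by_cases hL1 : FreqAux.LL a < 1
    · exact ⟨FreqAux.xx a, fun k hk => (FreqAux.hasFreq_iff _ k (a k)).2
        (FreqAux.main_tendsto a hmono hconv ha0 hpos hL1 k hk)⟩
    · push_neg at hL1
      have hak : ∀ k, a k = 1 := by
        intro k
        have h1 : FreqAux.LL a ≤ a k := FreqAux.LL_le a hpos k
        have h2 : a k ≤ 1 := FreqAux.a_le_one a hmono ha0 k
        linarith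
      refine ⟨fun _ => false, fun k hk => ?_⟩
      rw [FreqAux.hasFreq_iff, hak k]
      have hS : ∀ n, FreqAux.Scount (fun _ => false) k n = n := by
        intro n
        unfold FreqAux.Scount
        rw [Finset.filter_true_of_mem (fun j _ => fun i _ => rfl), Finset.card_range]
      apply Filter.Tendsto.congr' (f₁ := fun _ : ℕ => (1 : ℝ))
      · filter_upwards [Filter.eventually_ge_atTop 1] with n hn
        rw [hS n, div_self (Nat.cast_ne_zero.2 (by omega))]
      · exact tendsto_const_nhds
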